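/- The Weierstrass curve Ẽ: y² = x³ − (156217789162987774532352000000000000/40642963201)·x + 22789637573454810302335707893243904000000000000000000/8193662024284801 over ℚ is an elliptic curve (its discriminant is nonzero), the point P̃ = (19558022787408000000/201601, 86476754780118743040000000000/90518849) lies on Ẽ, and P̃ has infinite order in the group Ẽ(ℚ). -/

import Mathlib

/-- The specialized Weierstrass curve `Ẽ` over `ℚ`. -/
noncomputable def Etilde : WeierstrassCurve.Affine ℚ :=
  { a₁ := 0, a₂ := 0, a₃ := 0,
    a₄ := -(156217789162987774532352000000000000 / 40642963201 : ℚ),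
    a₆ := (22789637573454810302335707893243904000000000000000000 / 8193662024284801 : ℚ) }

namespace Stmt12Aux

open WeierstrassCurve.Affine WeierstrassCurve.Affine.Point

local notation "V" => padicValRat 2

lemma ea1 : Etilde.a₁ = 0 := rfl
lemma ea2 : Etilde.a₂ = 0 := rfl
lemma ea3 : Etilde.a₃ = 0 := rfl

lemma some_eq_some {x₁ y₁ x₂ y₂ : ℚ} (hx : x₁ = x₂) (hy : y₁ = y₂)
    (h₁ : Etilde.Nonsingular x₁ y₁) :
    ∃ h₂ : Etilde.Nonsingular x₂ y₂, Point.some _ _ h₁ = Point.some _ _ h₂ := by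
  subst hx; subst hy; exact ⟨h₁, rfl⟩

lemma val_nat {a : ℕ} (ha : ¬ 2 ∣ a) : V (a : ℚ) = 0 := by
  rw [padicValRat.of_nat, padicValNat.eq_zero_of_not_dvd ha, Nat.cast_zero]

lemma val_two : V (2 : ℚ) = 1 := by
  rw [show (2 : ℚ) = ((2 : ℕ) : ℚ) by norm_num]
  exact padicValRat.self (by norm_num)

/-- valuation of an explicit rational `± 2^k * a / b` with `a`, `b` odd. -/
lemma val_eq_of {a b : ℕ} (k : ℕ) (ha : ¬ 2 ∣ a) (hb : ¬ 2 ∣ b) {q : ℚ}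
    (hq : q = 2 ^ k * (a : ℚ) / b ∨ q = -(2 ^ k * (a : ℚ) / b)) : V q = k := by
  have ha0n : a ≠ 0 := by rintro rfl; exact ha (dvd_zero 2)
  have hb0n : b ≠ 0 := by rintro rfl; exact hb (dvd_zero 2)
  have ha0 : (a : ℚ) ≠ 0 := Nat.cast_ne_zero.mpr ha0n
  have hb0 : (b : ℚ) ≠ 0 := Nat.cast_ne_zero.mpr hb0n
  have h2 : (2 : ℚ) ^ k ≠ 0 := by positivity
  have key : V (2 ^ k * (a : ℚ) / b) = k := by
    rw [padicValRat.div (mul_ne_zero h2 ha0) hb0, padicValRat.mul h2 ha0,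
      padicValRat.pow (2 : ℚ), val_two, val_nat ha, val_nat hb]
    ring
  rcases hq with rfl | rfl
  · exact key
  · rw [padicValRat.neg]; exact key

lemma val_zero_of {a b : ℕ} (ha : ¬ 2 ∣ a) (hb : ¬ 2 ∣ b) {q : ℚ}
    (hq : q = (a : ℚ) / b ∨ q = -((a : ℚ) / b)) : V q = 0 := by
  have := val_eq_of (a := a) (b := b) 0 ha hb (q := q) ?_
  · simpa using this
  · rcases hq with rfl | rfl
    · left; norm_num
    · right; norm_num

/-- `G c r` means `r` is zero or has valuation greater than `c`. -/
def G (c : ℤ) (r : ℚ) : Prop := r = 0 ∨ c < V r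

lemma G_add {c : ℤ} {r s : ℚ} (hr : G c r) (hs : G c s) : G c (r + s) := by
  rcases hr with rfl | hr
  · simpa using hs
  rcases hs with rfl | hs
  · rw [add_zero]; exact Or.inr hr
  by_cases h0 : r + s = 0
  · exact Or.inl h0
  · exact Or.inr (lt_of_lt_of_le (lt_min hr hs) (padicValRat.min_le_padicValRat_add h0))

lemma val_add_G {q r : ℚ} (hq : q ≠ 0) (h : G (V q) r) :
    q + r ≠ 0 ∧ V (q + r) = V q := by
  rcases h with rfl | h
  · simpa using hq
  by_cases hr : r = 0
  · subst hr; simpa using hq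
  have hs : q + r ≠ 0 := by
    intro h0
    have hre : r = -q := by linarith [h0]
    rw [hre, padicValRat.neg] at h
    exact lt_irrefl _ h
  exact ⟨hs, padicValRat.add_eq_of_lt hs hq hr h⟩

end Stmt12Aux

namespace Stmt12Aux2
open WeierstrassCurve.Affine WeierstrassCurve.Affine.Point Stmt12Aux

local notation "V" => padicValRat 2

lemma hA0 : Etilde.a₄ ≠ 0 := by
  rw [show Etilde.a₄ = -(156217789162987774532352000000000000 / 40642963201 : ℚ) from rfl]
  norm_num

lemma hB0 : Etilde.a₆ ≠ 0 := by
  rw [show Etilde.a₆ = (22789637573454810302335707893243904000000000000000000 / 8193662024284801 : ℚ) from rfl]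
  norm_num

lemma hAv : V Etilde.a₄ = 20 := by
  apply val_eq_of 20 (a := 148980893290508055240966796875) (b := 40642963201)
    (by norm_num) (by norm_num)
  right
  rw [show Etilde.a₄ = -(156217789162987774532352000000000000 / 40642963201 : ℚ) from rfl]
  norm_num

lemma hBv : V Etilde.a₆ = 31 := by
  apply val_eq_of 31 (a := 10612251969731790154397351617572784423828125) (b := 8193662024284801)
    (by norm_num) (by norm_num)
  left
  rw [show Etilde.a₆ = (22789637573454810302335707893243904000000000000000000 / 8193662024284801 : ℚ) from rfl]
  norm_num

lemma negY_eq (x y : ℚ) : Etilde.negY x y = -y := by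
  simp [WeierstrassCurve.Affine.negY, ea1, ea3]

lemma step {x y : ℚ} (m : ℕ) (h : Etilde.Nonsingular x y)
    (hx0 : x ≠ 0) (hy0 : y ≠ 0)
    (hx : V x = -(2 * (m : ℤ))) (hy : V y = -(3 * (m : ℤ))) :
    ∃ (x' y' : ℚ) (h' : Etilde.Nonsingular x' y'),
      Point.some _ _ h + Point.some _ _ h = Point.some _ _ h' ∧ x' ≠ 0 ∧ y' ≠ 0 ∧
      V x' = -(2 * ((m : ℤ) + 1)) ∧ V y' = -(3 * ((m : ℤ) + 1)) := by
  have hm : (0 : ℤ) ≤ (m : ℤ) := Int.natCast_nonneg m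
  set A := Etilde.a₄ with hA
  set B := Etilde.a₆ with hB
  have h_eq : y ^ 2 = x ^ 3 + A * x + B := by
    have he := h.1
    rw [WeierstrassCurve.Affine.equation_iff] at he
    rw [ea1, ea2, ea3] at he
    linarith [he]
  have hy_ne : y ≠ Etilde.negY x y := by
    rw [negY_eq]
    intro hcon
    exact hy0 (by linarith)
  -- slope and coordinates of the doubled point
  have hL : Etilde.slope x x y y = (3 * x ^ 2 + A) / (2 * y) := by
    rw [WeierstrassCurve.Affine.slope_of_Y_ne rfl hy_ne, negY_eq, ea1, ea2, ← hA,
      show y - -y = 2 * y by ring]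
    ring_nf
  have hx'eq : Etilde.addX x x (Etilde.slope x x y y)
      = (x ^ 4 + (-(2 * A * x ^ 2) + (-(8 * B * x) + A ^ 2))) / (4 * y ^ 2) := by
    rw [WeierstrassCurve.Affine.addX, ea1, ea2, hL]
    field_simp
    linear_combination (-32 * x) * h_eq
  -- valuation of the new x-coordinate
  have hx4 : x ^ 4 ≠ 0 := pow_ne_zero 4 hx0
  have vx4 : V (x ^ 4) = -(8 * (m : ℤ)) := by
    rw [padicValRat.pow x, hx]; push_cast; ring
  have hgx : G (V (x ^ 4)) (-(2 * A * x ^ 2) + (-(8 * B * x) + A ^ 2)) := by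
    rw [vx4]
    refine G_add (Or.inr ?_) (G_add (Or.inr ?_) (Or.inr ?_))
    · rw [padicValRat.neg,
        show (2 : ℚ) * A * x ^ 2 = (2 * A) * x ^ 2 by ring,
        padicValRat.mul (mul_ne_zero two_ne_zero hA0) (pow_ne_zero 2 hx0),
        padicValRat.mul two_ne_zero hA0, val_two, hAv, padicValRat.pow x, hx]
      push_cast
      linarith
    · rw [padicValRat.neg,
        show (8 : ℚ) * B * x = (8 * B) * x by ring,
        padicValRat.mul (mul_ne_zero (by norm_num) hB0) hx0,
        padicValRat.mul (show (8:ℚ) ≠ 0 by norm_num) hB0,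
        show (8 : ℚ) = 2 ^ 3 by norm_num, padicValRat.pow (2 : ℚ), val_two, hBv, hx]
      push_cast
      linarith
    · rw [padicValRat.pow A, hAv]
      push_cast
      linarith
  obtain ⟨hN0, vN⟩ := val_add_G hx4 hgx
  rw [vx4] at vN
  have hD0 : (4 : ℚ) * y ^ 2 ≠ 0 := by
    apply mul_ne_zero (by norm_num) (pow_ne_zero 2 hy0)
  have vD : V (4 * y ^ 2) = 2 - 6 * (m : ℤ) := by
    rw [padicValRat.mul (by norm_num) (pow_ne_zero 2 hy0),
      show (4 : ℚ) = 2 ^ 2 by norm_num, padicValRat.pow (2 : ℚ), val_two,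
      padicValRat.pow y, hy]
    ring
  have hx'0 : Etilde.addX x x (Etilde.slope x x y y) ≠ 0 := by
    rw [hx'eq]; exact div_ne_zero hN0 hD0
  have vx' : V (Etilde.addX x x (Etilde.slope x x y y)) = -(2 * ((m : ℤ) + 1)) := by
    rw [hx'eq, padicValRat.div hN0 hD0, vN, vD]; push_cast; ring
  -- valuation of the new y-coordinate
  have h' := nonsingular_add h h (fun hxy => hy_ne hxy.right)
  have h'eq : Etilde.addY x x y (Etilde.slope x x y y) ^ 2
      = Etilde.addX x x (Etilde.slope x x y y) ^ 3
        + (A * Etilde.addX x x (Etilde.slope x x y y) + B) := by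
    have he := h'.1
    rw [WeierstrassCurve.Affine.equation_iff] at he
    rw [ea1, ea2, ea3, ← hA, ← hB] at he
    linarith [he]
  set x' := Etilde.addX x x (Etilde.slope x x y y)
  have hx'3 : x' ^ 3 ≠ 0 := pow_ne_zero 3 hx'0
  have vx'3 : V (x' ^ 3) = -(6 * ((m : ℤ) + 1)) := by
    rw [padicValRat.pow x', vx']; push_cast; ring
  have hgy : G (V (x' ^ 3)) (A * x' + B) := by
    rw [vx'3]
    refine G_add (Or.inr ?_) (Or.inr ?_)
    · rw [padicValRat.mul hA0 hx'0, hAv, vx']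
      push_cast
      linarith
    · rw [hBv]
      push_cast
      linarith
  obtain ⟨hM0, vM⟩ := val_add_G hx'3 hgy
  rw [vx'3] at vM
  rw [← h'eq] at hM0 vM
  have hy'0 : Etilde.addY x x y (Etilde.slope x x y y) ≠ 0 := by
    intro hcon
    rw [hcon] at hM0
    exact hM0 (by norm_num)
  have vy' : V (Etilde.addY x x y (Etilde.slope x x y y)) = -(3 * ((m : ℤ) + 1)) := by
    rw [padicValRat.pow (Etilde.addY x x y (Etilde.slope x x y y))] at vM
    push_cast at vM
    linarith
  exact ⟨_, _, h', WeierstrassCurve.Affine.Point.add_self_of_Y_ne hy_ne,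
    hx'0, hy'0, vx', vy'⟩

end Stmt12Aux2

namespace Stmt12Num
open WeierstrassCurve.Affine WeierstrassCurve.Affine.Point Stmt12Aux Stmt12Aux2

local notation "V" => padicValRat 2

def X1 : ℚ := ((19558022787408000000 : ℚ) / 201601)
def Y1 : ℚ := ((86476754780118743040000000000 : ℚ) / 90518849)
def X2 : ℚ := ((13505926371726302913000000 : ℚ) / 556201232521)
def Y2 : ℚ := ((49477628240157063278169317025000000000 : ℚ) / 414808761000604069)
def X4 : ℚ := ((4307230077311558929002797513882422871681080003536290250000 : ℚ) / 697000807860754587051454387517873522485353361)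
def Y4 : ℚ := ((269828986915531205433754384445844916890948232614721739832504543600471992281940625000000 : ℚ) / 18401360014940217570689510051260251019603191041971367550176188307641)
def X8 : ℚ := ((17492644001775979733048893429552415829466253225430338695852676493006175992685672278942869557058399913054682733713837801109213527311280818708473909701348116083722221175470922699192779569085848606780100 : ℚ) / 9234739254666430940753952655344641432714744571255932898857718782436575376435153590113059674018041585234856654672379375763785497592444812013771339930842307571186991546151579575335388139121)
def Y8 : ℚ := ((42534369998860486273008981588709706443739883263302703760038214943498733752319017364320627853448869561576793761769811930999464638271831285835231335394705684862614128028490428412525743657509371887466826479851463699166312130260753387863446301054149489844591609274592060079581969171452168055466739549000 : ℚ) / 28063184808308375139725531925766296821794503060796216014425089336141293764918943923662056268251263711918215891807890940175586289460431775911811347229944739383799117840870941486567691171974667423573900188623447078671316655437337528949768544640728273817148078135608394868761940451081)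
def X16 : ℚ := ((715859799276105226729786019831075169158087917532506058426984331243831800666892649295665857589805761860138449542626118578824269449710137943423422960770315451164769639069419219964881082860449010843876527151466990484365353492989238909362751941806493471956182776524607777132040755311009877942282950307754314609032593752555358957309304586673360746027379047351223158866540979709760398015359249296712279836497227794487306823486789274964412910638786608839357992242739118604850450928429760347898566009596353218000465275196122016529160958993409388716169105630901566260569075893952524203772438702967789665199585911207056965112355316491403958621519497753851767635355660803382486508473773728860666973909850814991084678788866694753100235763495360595555449744416675602424921594134961993225 : ℚ) / 502812763503376322382119565743758934040866582380760671811308749777738568593300381497042770597175764580893976061303240185719803970384833286342043971456602008913164826472358438013525593729010831303428379073541479913376427036867730247892995774176297569596236479755011929677980518441232481842636859095544465171545084198487240064617321243293429185985413081220197877903930307247689004794375943800500387905409816007704224245644533906695143520309775809635820703043233183846303845247950976685754725896880743703121211714816553586250329995388725200266577943690918055958849443114478235187671903334167039924161830751228416274960076270002008445044867978604432002947448483254745877546015565254941557226825278254638893375191630488422403129220412571304960986259859361451025368009)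
def Y16 : ℚ := (-((157405866688083650005946989201755987394821841304116315162045029313566720335629286967778044511696135340349070934067676512982755864513685879220364436264134124481405845260655124436375084454675175816472679499254311676491303482950725691940900694913187511410587018065480570972597315998154253458263000700740391291730606364561976971608841186577021295579973042424172470374747012013620363102526786311668991423687792646096731135363951398931287311713650509524026254799306614805014439344607319946247717135345322962947834133570715559836644450777015238394485557972042476890907256719483206447839203854338063191919453630973825399390477313378042332779686218575582482581800972410981938474560160532651336046944286913145692149604231903404405546222097413929098282387603304844901026820904801122102723666148535332250264854719333368725046558162751303816653279718754311319731919205968946756096388909966347857963226852851444528774828221370170533948162782774005963553621878621347744031569322720670491329565822320058885372413377154618727121813247826323918683226028754671377151418825846927796775662274664694053343515757915605046886511383944582604182276518074752377112217095099168535056977125 : ℚ) / 3565409686682432686590956695910794645732828144135928300004271342712673185499475428038085727725539132732361063242237643587003982685441979766343297798513787671319659441386011598052481725548166151595920728224996927797343913788255974894677275011150436985114667428815108793046241430191356991136350867812908140316154791745221916358271334705768744518333669361080886504028807914021690983570566088545686856415159317832283533189655362313355684396019400848977247059399238994576085217134048793363662671468958909978988424313770650818850189487712226658640097883005848733762125988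58050721423641260751818099197092085591367494037317528287744779410643709810236176100941804980846742378344295125205005762625176853517995704371666729297015888406823436137732250375833636784729016935750120752011065699964452036700726747457365712133768774723684068703803127766449992644137433216535421898770283090684382342885020525405222476609864003784314908030397092742641786780150561962327163195959710125599616642421077475978214414471431963680287669103912135982610868638069111522098346838455342640942742238352067326922503927210495790880781475559337687595392159478779892650795542156027))

lemma eqA4 : Etilde.a₄ = -(156217789162987774532352000000000000 / 40642963201 : ℚ) := rfl
lemma eqA6 : Etilde.a₆ = (22789637573454810302335707893243904000000000000000000 / 8193662024284801 : ℚ) := rfl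

lemma nonsing_of {x y : ℚ} (heq : y ^ 2 = x ^ 3 + Etilde.a₄ * x + Etilde.a₆) (hy : y ≠ 0) :
    Etilde.Nonsingular x y := by
  rw [WeierstrassCurve.Affine.nonsingular_iff, WeierstrassCurve.Affine.equation_iff,
    ea1, ea2, ea3]
  refine ⟨by linarith, Or.inr fun hc => hy (by linarith)⟩

lemma dbl_eq {x y x' y' : ℚ} (h : Etilde.Nonsingular x y) (hy0 : y ≠ 0)
    (hx' : ((3 * x ^ 2 + Etilde.a₄) / (2 * y)) ^ 2 - 2 * x = x')
    (hy' : -(((3 * x ^ 2 + Etilde.a₄) / (2 * y)) * (x' - x) + y) = y') :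
    ∃ h' : Etilde.Nonsingular x' y', Point.some _ _ h + Point.some _ _ h = Point.some _ _ h' := by
  have hy_ne : y ≠ Etilde.negY x y := by
    rw [negY_eq]; intro hc; exact hy0 (by linarith)
  have hL : Etilde.slope x x y y = (3 * x ^ 2 + Etilde.a₄) / (2 * y) := by
    rw [WeierstrassCurve.Affine.slope_of_Y_ne rfl hy_ne, negY_eq, ea1, ea2,
      show y - -y = 2 * y by ring]
    ring_nf
  have e1 : Etilde.addX x x (Etilde.slope x x y y) = x' := by
    rw [WeierstrassCurve.Affine.addX, ea1, ea2, hL, ← hx']; ring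
  have e2 : Etilde.addY x x y (Etilde.slope x x y y) = y' := by
    rw [WeierstrassCurve.Affine.addY, negY_eq, WeierstrassCurve.Affine.negAddY, e1, hL, ← hy']
  obtain ⟨h', e⟩ := some_eq_some e1 e2 (nonsingular_add h h fun hxy => hy_ne hxy.right)
  exact ⟨h', (WeierstrassCurve.Affine.Point.add_self_of_Y_ne hy_ne).trans e⟩

lemma hP : Etilde.Nonsingular X1 Y1 :=
  nonsing_of (by rw [eqA4, eqA6]; norm_num [X1, Y1]) (by norm_num [Y1])


lemma dblx1 : ((3 * X1 ^ 2 + Etilde.a₄) / (2 * Y1)) ^ 2 - 2 * X1 = X2 := by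
  rw [eqA4]; norm_num [X1, Y1, X2]

lemma dbly1 : -(((3 * X1 ^ 2 + Etilde.a₄) / (2 * Y1)) * (X2 - X1) + Y1) = Y2 := by
  rw [eqA4]; norm_num [X1, Y1, X2, Y2]


lemma dblx2 : ((3 * X2 ^ 2 + Etilde.a₄) / (2 * Y2)) ^ 2 - 2 * X2 = X4 := by
  rw [eqA4]; norm_num [X2, Y2, X4]

lemma dbly2 : -(((3 * X2 ^ 2 + Etilde.a₄) / (2 * Y2)) * (X4 - X2) + Y2) = Y4 := by
  rw [eqA4]; norm_num [X2, Y2, X4, Y4]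


lemma dblx4 : ((3 * X4 ^ 2 + Etilde.a₄) / (2 * Y4)) ^ 2 - 2 * X4 = X8 := by
  rw [eqA4]; norm_num [X4, Y4, X8]

lemma dbly4 : -(((3 * X4 ^ 2 + Etilde.a₄) / (2 * Y4)) * (X8 - X4) + Y4) = Y8 := by
  rw [eqA4]; norm_num [X4, Y4, X8, Y8]


lemma dblx8 : ((3 * X8 ^ 2 + Etilde.a₄) / (2 * Y8)) ^ 2 - 2 * X8 = X16 := by
  rw [eqA4]; norm_num [X8, Y8, X16]

lemma dbly8 : -(((3 * X8 ^ 2 + Etilde.a₄) / (2 * Y8)) * (X16 - X8) + Y8) = Y16 := by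
  rw [eqA4]; norm_num [X8, Y8, X16, Y16]


lemma hy1 : Y1 ≠ 0 := by norm_num [Y1]
lemma hy2 : Y2 ≠ 0 := by norm_num [Y2]
lemma hy4 : Y4 ≠ 0 := by norm_num [Y4]
lemma hy8 : Y8 ≠ 0 := by norm_num [Y8]
lemma hx16_ne : X16 ≠ 0 := by norm_num [X16]
lemma hy16_ne : Y16 ≠ 0 := by norm_num [Y16]

lemma vX16 : V X16 = 0 :=
  val_zero_of (a := 715859799276105226729786019831075169158087917532506058426984331243831800666892649295665857589805761860138449542626118578824269449710137943423422960770315451164769639069419219964881082860449010843876527151466990484365353492989238909362751941806493471956182776524607777132040755311009877942282950307754314609032593752555358957309304586673360746027379047351223158866540979709760398015359249296712279836497227794487306823486789274964412910638786608839357992242739118604850450928429760347898566009596353218000465275196122016529160958993409388716169105630901566260569075893952524203772438702967789665199585911207056965112355316491403958621519497753851767635355660803382486508473773728860666973909850814991084678788866694753100235763495360595555449744416675602424921594134961993225) (b := 5028127635033763223821195657437589340408665823807606718113087497777385685933003814970427705971757645808939760613032401857198039703848332863420439714566020089131648264723584380135255937290108313034283790735414799133764270368677302478929957741762975695962364797550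11929677980518441232481842636859095544465171545084198487240064617321243293429185985413081220197877903930307247689004794375943800500387905409816007704224245644533906695143520309775809635820703043233183846303845247950976685754725896880743703121211714816553586250329995388725200266577943690918055958849443114478235187671903334167039924161830751228416274960076270002008445044867978604432002947448483254745877546015565254941557226825278254638893375191630488422403129220412571304960986259859361451025368009)
    (by norm_num) (by norm_num) (Or.inl (by norm_num [X16]))

lemma vY16 : V Y16 = 0 :=
  val_zero_of (a := 157405866688083650005946989201755987394821841304116315162045029313566720335629286967778044511696135340349070934067676512982755864513685879220364436264134124481405845260655124436375084454675175816472679499254311676491303482950725691940900694913187511410587018065480570972597315998154253458263000700740391291730606364561976971608841186577021295579973042424172470374747012013620363102526786311668991423687792646096731135363951398931287311713650509524026254799306614805014439344607319946247717135345322962947834133570715559836644450777015238394485557972042476890907256719483206447839203854338063191919453630973825399390477313378042332779686218575582482581800972410981938474560160532651336046944286913145692149604231903404405546222097413929098282387603304844901026820904801122102723666148535332250264854719333368725046558162751303816653279718754311319731919205968946756096388909966347857963226852851444528774828221370170533948162782774005963553621878621347744031569322720670491329565822320058885372413377154618727121813247826323918683226028754671377151418825846927796775662274664694053343515757915605046886511383944582604182276518074752377112217095099168535056977125)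 (b := 356540968668243268659095669591079464573282814413592830000427134271267318549947542803808572772553913273236106324223764358700398268544197976634329779851378767131965944138601159805248172554816615159592072822499692779734391378825597489467727501115043698511466742881510879304624143019135699113635086781290814031615479174522191635827133470576874451833366936108088650402880791402169098357056608854568685641515931783228353318965536231335568439601940084897724705939923899457608521713404879336366267146895890997898842431377065081885018948771222665864009788300584873376212598858050721423641260751818099197092085591367494037317528287744779410643709810236176100941804980846742378344295125205005762625176853517995704371666729297015888406823436137732250375833636784729016935750120752011065699964452036700726747457365712133768774723684068703803127766449992644137433216535421898770283090684382342885020525405222476609864003784314908030397092742641786780150561962327163195959710125599616642421077475978214414471431963680287669103912135982610868638069111522098346838455342640942742238352067326922503927210495790880781475559337687595392159478779892650795542156027)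
    (by norm_num) (by norm_num) (Or.inr (by norm_num [Y16]))

end Stmt12Num

namespace Stmt12Final
open WeierstrassCurve.Affine WeierstrassCurve.Affine.Point Stmt12Aux Stmt12Aux2 Stmt12Num

local notation "V" => padicValRat 2

lemma infinite_order : ¬ IsOfFinAddOrder (Point.some _ _ hP) := by
  intro hfin
  -- the chain of doublings up to 16P
  obtain ⟨h2, e2⟩ := dbl_eq hP hy1 dblx1 dbly1
  obtain ⟨h4, e4⟩ := dbl_eq h2 hy2 dblx2 dbly2
  obtain ⟨h8, e8⟩ := dbl_eq h4 hy4 dblx4 dbly4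
  obtain ⟨h16, e16⟩ := dbl_eq h8 hy8 dblx8 dbly8
  set S : Etilde.Point := Point.some _ _ h16 with hS
  have hfin2 : IsOfFinAddOrder (Point.some _ _ h2) := e2 ▸ hfin.add hfin
  have hfin4 : IsOfFinAddOrder (Point.some _ _ h4) := e4 ▸ hfin2.add hfin2
  have hfin8 : IsOfFinAddOrder (Point.some _ _ h8) := e8 ▸ hfin4.add hfin4
  have hfinS : IsOfFinAddOrder S := e16 ▸ hfin8.add hfin8
  -- the valuation-descent invariant
  have key : ∀ n : ℕ, ∃ (x y : ℚ) (hh : Etilde.Nonsingular x y),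
      (2 ^ n) • S = Point.some _ _ hh ∧ x ≠ 0 ∧ y ≠ 0 ∧
      V x = -(2 * (n : ℤ)) ∧ V y = -(3 * (n : ℤ)) := by
    intro n
    induction n with
    | zero =>
      refine ⟨X16, Y16, h16, by rw [pow_zero, one_nsmul], hx16_ne, hy16_ne, ?_, ?_⟩
      · rw [vX16]; simp
      · rw [vY16]; simp
    | succ n ih =>
      obtain ⟨x, y, hh, hSn, hx0, hy0, hvx, hvy⟩ := ih
      obtain ⟨x', y', h', hd, hx0', hy0', hvx', hvy'⟩ := step n hh hx0 hy0 hvx hvy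
      refine ⟨x', y', h', ?_, hx0', hy0', ?_, ?_⟩
      · rw [pow_succ, mul_two, add_nsmul, hSn, hd]
      · rw [hvx']; push_cast; ring
      · rw [hvy']; push_cast; ring
  -- pigeonhole on powers of two modulo the order of S
  set N := addOrderOf S with hNdef
  have hNpos : 0 < N := hfinS.addOrderOf_pos
  have hcard : Fintype.card (Fin N) < Fintype.card (Fin (N + 1)) := by simp
  obtain ⟨i, j, hij, hf⟩ := Fintype.exists_ne_map_eq_of_card_lt
    (fun i : Fin (N + 1) => (⟨2 ^ (i : ℕ) % N, Nat.mod_lt _ hNpos⟩ : Fin N)) hcard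
  have hmod : 2 ^ (i : ℕ) ≡ 2 ^ (j : ℕ) [MOD N] := by
    simpa [Nat.ModEq] using congrArg Fin.val hf
  have hsmul : (2 ^ (i : ℕ)) • S = (2 ^ (j : ℕ)) • S := by
    rw [nsmul_eq_nsmul_iff_modEq, ← hNdef]
    exact hmod
  obtain ⟨xi, yi, hhi, hSi, -, -, hvxi, -⟩ := key (i : ℕ)
  obtain ⟨xj, yj, hhj, hSj, -, -, hvxj, -⟩ := key (j : ℕ)
  rw [hSi, hSj] at hsmul
  rw [WeierstrassCurve.Affine.Point.some.injEq] at hsmul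
  obtain ⟨hxx, -⟩ := hsmul
  rw [hxx, hvxj] at hvxi
  have : (i : ℕ) = (j : ℕ) := by omega
  exact hij (Fin.val_injective this)

end Stmt12Final

/-- The curve `Ẽ : y² = x³ − (156217789162987774532352000000000000/40642963201)x +
22789637573454810302335707893243904000000000000000000/8193662024284801` is an elliptic curve
(nonzero discriminant), the point
`P̃ = (19558022787408000000/201601, 86476754780118743040000000000/90518849)` lies on `Ẽ`, and
`P̃` has infinite order in `Ẽ(ℚ)`. -/
theorem stmt_12 :
    Etilde.Δ ≠ 0 ∧
    ∃ h : Etilde.Nonsingular (19558022787408000000 / 201601 : ℚ)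
        (86476754780118743040000000000 / 90518849 : ℚ),
      ¬ IsOfFinAddOrder (WeierstrassCurve.Affine.Point.some _ _ h) := by
  constructor
  · rw [WeierstrassCurve.Δ]
    simp only [WeierstrassCurve.b₂, WeierstrassCurve.b₄, WeierstrassCurve.b₆,
      WeierstrassCurve.b₈, Stmt12Num.eqA4, Stmt12Num.eqA6, Stmt12Aux.ea1, Stmt12Aux.ea2,
      Stmt12Aux.ea3]
    norm_num
  · exact ⟨Stmt12Num.hP, Stmt12Final.infinite_order⟩
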